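/- Let x, y be real numbers with π/2 ≤ y < x ≤ π, and write sinc(z) = sin(z)/z. Then sinc(y) · (1 − (2/π)·y·(1 − y/x)) · cos( y·(1 − y/x) / (1 − (2/π)·y·(1 − y/x)) ) ≥ sinc(x). -/

import Mathlib

open Real Set

set_option maxHeartbeats 1000000

-- L1 : θ cos θ ≤ sin θ on [0, π]
lemma L1 {θ : ℝ} (h0 : 0 ≤ θ) (h1 : θ ≤ π) : θ * Real.cos θ ≤ Real.sin θ := by
  have key : MonotoneOn (fun z : ℝ => Real.sin z - z * Real.cos z) (Icc 0 π) := by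
    apply monotoneOn_of_deriv_nonneg (convex_Icc 0 π)
    · fun_prop
    · apply Differentiable.differentiableOn; fun_prop
    · intro z hz
      rw [interior_Icc] at hz
      have hd : HasDerivAt (fun z : ℝ => Real.sin z - z * Real.cos z)
          (Real.cos z - (1 * Real.cos z + z * (-Real.sin z))) z :=
        (Real.hasDerivAt_sin z).sub ((hasDerivAt_id z).mul (Real.hasDerivAt_cos z))
      rw [hd.deriv]
      have : 0 ≤ Real.sin z := Real.sin_nonneg_of_nonneg_of_le_pi hz.1.le hz.2.le
      nlinarith [hz.1]
  have := key (left_mem_Icc.2 (by positivity)) ⟨h0, h1⟩ h0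
  simpa using this

-- L2 : 0 ≤ 2θ − 3 sin θ + θ cos θ on [0, π]
lemma L2 {θ : ℝ} (h0 : 0 ≤ θ) (h1 : θ ≤ π) : 0 ≤ 2*θ - 3*Real.sin θ + θ*Real.cos θ := by
  have key : MonotoneOn (fun z : ℝ => 2*z - 3*Real.sin z + z * Real.cos z) (Icc 0 π) := by
    apply monotoneOn_of_deriv_nonneg (convex_Icc 0 π)
    · fun_prop
    · apply Differentiable.differentiableOn; fun_prop
    · intro z hz
      rw [interior_Icc] at hz
      have hd : HasDerivAt (fun z : ℝ => 2*z - 3*Real.sin z + z * Real.cos z)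
          (2 - 3 * Real.cos z + (1 * Real.cos z + z * (-Real.sin z))) z := by
        have := (((hasDerivAt_id z).const_mul (2:ℝ)).sub ((Real.hasDerivAt_sin z).const_mul 3)).add
          ((hasDerivAt_id z).mul (Real.hasDerivAt_cos z))
        exact this.congr_deriv (by norm_num)
      rw [hd.deriv]
      have hs : Real.sin z = 2 * Real.sin (z/2) * Real.cos (z/2) := by
        rw [← Real.sin_two_mul]; ring_nf
      have hc : Real.cos z = 1 - 2 * Real.sin (z/2)^2 := by
        have h2m : Real.cos (2 * (z/2)) = Real.cos (z/2)^2 - Real.sin (z/2)^2 :=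
          Real.cos_two_mul' (x := z/2)
        have h2 := Real.sin_sq_add_cos_sq (z/2)
        rw [show 2 * (z/2) = z by ring] at h2m
        nlinarith
      have hL1 : (z/2) * Real.cos (z/2) ≤ Real.sin (z/2) :=
        L1 (by linarith [hz.1]) (by linarith [hz.2, Real.pi_pos])
      have hs0 : 0 ≤ Real.sin (z/2) :=
        Real.sin_nonneg_of_nonneg_of_le_pi (by linarith [hz.1]) (by linarith [hz.2, Real.pi_pos])
      rw [hs, hc]
      nlinarith [mul_nonneg hs0 (sub_nonneg.2 hL1)]
  have := key (left_mem_Icc.2 (by positivity)) ⟨h0, h1⟩ h0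
  simpa using this

-- L3 (♦) : sin c (sin c − c cos c) ≤ (c − sin c cos c)(π − c) on [π/2, π]
lemma L3 {c : ℝ} (h0 : π/2 ≤ c) (h1 : c ≤ π) :
    Real.sin c * (Real.sin c - c * Real.cos c) ≤ (c - Real.sin c * Real.cos c) * (π - c) := by
  obtain ⟨ε, hcε, hε0, hε1⟩ : ∃ ε, c = π - ε ∧ 0 ≤ ε ∧ ε ≤ π/2 :=
    ⟨π - c, by ring, by linarith, by linarith⟩
  subst hcε
  rw [Real.sin_pi_sub, Real.cos_pi_sub]
  set s := Real.sin ε with hsdef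
  set co := Real.cos ε with hcodef
  have hpyth : s^2 + co^2 = 1 := Real.sin_sq_add_cos_sq ε
  have hs0 : 0 ≤ s := Real.sin_nonneg_of_nonneg_of_le_pi hε0 (by linarith [Real.pi_pos])
  have hco0 : 0 ≤ co := Real.cos_nonneg_of_mem_Icc ⟨by linarith, hε1⟩
  have hsε : s ≤ ε := Real.sin_le hε0
  have hsco : s * co ≤ ε := by nlinarith [Real.cos_le_one ε]
  have hπε : (0:ℝ) ≤ π - ε := by linarith [Real.pi_pos, hε1, Real.pi_gt_three]
  -- q ≥ (2/3) ε s²  from L2 at θ = 2ε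
  have hL2 := L2 (θ := 2*ε) (by linarith) (by linarith)
  have hs2 : Real.sin (2*ε) = 2 * s * co := Real.sin_two_mul ε
  have hc2 : Real.cos (2*ε) = 1 - 2 * s^2 := by
    have := Real.cos_two_mul' (x := ε); rw [this]; nlinarith
  rw [hs2, hc2] at hL2
  have h1' : (2/3) * ε * s^2 ≤ ε - s*co := by nlinarith
  -- (2/3) ε (π − ε) ≥ s²
  have h3' : s^2 ≤ (2/3) * ε * (π - ε) := by
    rcases le_or_gt ε 1 with hle | hgt
    · nlinarith [Real.pi_gt_three]
    · nlinarith [Real.sin_le_one ε, Real.pi_gt_three, hsdef ▸ Real.sin_le_one ε]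
  -- assemble: π q − q² ≥ s⁴ with q = ε − s co
  have key : π * (ε - s*co) - (ε - s*co)^2 - s^4 ≥ 0 := by
    have hA := mul_le_mul_of_nonneg_right h1' hπε
    have hB : 0 ≤ (ε - s*co) * (ε - (ε - s*co)) := by
      apply mul_nonneg (by linarith); nlinarith
    have hC := mul_le_mul_of_nonneg_right h3' (sq_nonneg s)
    nlinarith
  have hco2 : co^2 = 1 - s^2 := by linarith [hpyth]
  nlinarith [key, sq_nonneg s, hco2]

-- L4 (★★)
lemma L4 {a c : ℝ} (ha : π/2 ≤ a) (hac : a ≤ c) (hc : c < π) :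
    (Real.sin a - a*Real.cos a) * a * Real.sin c
      ≤ (Real.sin c - c*Real.cos c) * (2*a - c) * Real.sin a := by
  have hsinpos : ∀ z ∈ Icc a c, 0 < Real.sin z := fun z hz =>
    Real.sin_pos_of_pos_of_lt_pi (by nlinarith [Real.pi_pos, hz.1]) (lt_of_le_of_lt hz.2 hc)
  have key : MonotoneOn (fun z => (Real.sin z - z*Real.cos z) * (2*a - z) / Real.sin z)
      (Icc a c) := by
    apply monotoneOn_of_deriv_nonneg (convex_Icc a c)
    · apply ContinuousOn.div (by fun_prop) (by fun_prop)
      exact fun z hz => ne_of_gt (hsinpos z hz)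
    · rw [interior_Icc]
      intro z hz
      have hz' : z ∈ Icc a c := ⟨hz.1.le, hz.2.le⟩
      have hderiv : HasDerivAt (fun z => (Real.sin z - z*Real.cos z) * (2*a - z))
          ((Real.cos z - (1 * Real.cos z + z * (-Real.sin z))) * (2*a - z)
            + (Real.sin z - z*Real.cos z) * (-1)) z :=
        ((Real.hasDerivAt_sin z).sub ((hasDerivAt_id z).mul (Real.hasDerivAt_cos z))).mul
          (((hasDerivAt_id z).const_sub (2*a)).congr_deriv rfl)
      exact ((hderiv.div (Real.hasDerivAt_sin z) (ne_of_gt (hsinpos z hz')))).differentiableAt.differentiableWithinAt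
    · rw [interior_Icc]
      intro z hz
      have hz' : z ∈ Icc a c := ⟨hz.1.le, hz.2.le⟩
      have hsz := hsinpos z hz'
      have hderiv : HasDerivAt (fun z => (Real.sin z - z*Real.cos z) * (2*a - z))
          ((Real.cos z - (1 * Real.cos z + z * (-Real.sin z))) * (2*a - z)
            + (Real.sin z - z*Real.cos z) * (-1)) z :=
        ((Real.hasDerivAt_sin z).sub ((hasDerivAt_id z).mul (Real.hasDerivAt_cos z))).mul
          (((hasDerivAt_id z).const_sub (2*a)).congr_deriv rfl)
      have hD := hderiv.div (Real.hasDerivAt_sin z) (ne_of_gt hsz)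
      rw [show (fun z => (Real.sin z - z*Real.cos z) * (2*a - z) / Real.sin z)
          = ((fun z => (Real.sin z - z*Real.cos z) * (2*a - z)) / Real.sin) from rfl, hD.deriv]
      apply div_nonneg _ (sq_nonneg _)
      have hz2 : π/2 ≤ z := le_trans ha hz.1.le
      have hzπ : z ≤ π := (lt_of_lt_of_le hz.2 (le_of_lt hc)).le
      have hL3 := L3 hz2 hzπ
      have hpyth := Real.sin_sq_add_cos_sq z
      have hcz : Real.cos z ≤ 0 := Real.cos_nonpos_of_pi_div_two_le_of_le hz2 (by linarith)
      have hzsc : 0 ≤ z - Real.sin z * Real.cos z := by nlinarith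
      have hA : 0 ≤ (2*a - π) * (z - Real.sin z * Real.cos z) :=
        mul_nonneg (by linarith) hzsc
      have hnum : ((Real.cos z - (1*Real.cos z + z*(-Real.sin z)))*(2*a-z)
            + (Real.sin z - z*Real.cos z)*(-1))*Real.sin z
            - (Real.sin z - z*Real.cos z)*(2*a-z)*Real.cos z
          = (2*a-z)*(z - Real.sin z*Real.cos z) - Real.sin z*(Real.sin z - z*Real.cos z) := by
        linear_combination (z*(2*a-z)) * hpyth
      rw [hnum]
      nlinarith [hL3, hA]
    done
  rcases eq_or_lt_of_le hac with rfl | hlt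
  · linear_combination (Real.sin a - a * Real.cos a) * Real.sin a * (0:ℝ) -- equality case
  · have h := key (left_mem_Icc.2 hac) (right_mem_Icc.2 hac) hac
    have hsa := hsinpos a (left_mem_Icc.2 hac)
    have hsc := hsinpos c (right_mem_Icc.2 hac)
    rw [div_le_div_iff₀ hsa hsc] at h
    linear_combination h

-- L5 : Ψ is antitone
lemma L5 (C B : ℝ) (hC : 4/π ≤ C) (hB : π/2 ≤ B) (hBπ : C*B^2/(C*B-1) < π) :
    AntitoneOn (fun a => Real.log (Real.sin (C*a^2/(C*a-1))) - Real.log (C*a^2/(C*a-1))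
      - Real.log (Real.sin a) + Real.log a) (Icc (π/2) B) := by
  have hπ := Real.pi_pos
  have hC' : (4:ℝ) ≤ C*π := by
    rw [div_le_iff₀ hπ] at hC; linarith
  -- pointwise facts
  have key : ∀ a ∈ Icc (π/2) B, 1 ≤ C*a - 1 ∧ a ≤ C*a^2/(C*a-1)
      ∧ C*a^2/(C*a-1) ≤ C*B^2/(C*B-1) := by
    intro a ⟨ha1, ha2⟩
    have haB : π/2 ≤ B := le_trans ha1 ha2
    have hq : 1 ≤ C*a - 1 := by nlinarith
    have hqB : 1 ≤ C*B - 1 := by nlinarith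
    refine ⟨hq, ?_, ?_⟩
    · rw [le_div_iff₀ (by linarith : (0:ℝ) < C*a-1)]; nlinarith
    · rw [div_le_div_iff₀ (by linarith : (0:ℝ) < C*a-1) (by linarith : (0:ℝ) < C*B-1)]
      have hC0 : (0:ℝ) ≤ C := by nlinarith
      have hsum : a + B ≤ C*a*B := by
        nlinarith [mul_nonneg (by linarith : (0:ℝ) ≤ a) (by linarith : (0:ℝ) ≤ 2*B-π),
          mul_nonneg (by linarith : (0:ℝ) ≤ B) (by linarith : (0:ℝ) ≤ 2*a-π),
          mul_le_mul_of_nonneg_right hC' (by nlinarith : (0:ℝ) ≤ a*B)]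
      nlinarith [mul_nonneg (mul_nonneg hC0 (by linarith : (0:ℝ) ≤ B-a))
        (by linarith : (0:ℝ) ≤ C*a*B - (a+B))]
  have hgen : ∀ a ∈ Icc (π/2) B, 0 < C*a-1 ∧ π/2 ≤ a ∧ a ≤ C*a^2/(C*a-1)
      ∧ C*a^2/(C*a-1) < π ∧ 0 < Real.sin a ∧ 0 < Real.sin (C*a^2/(C*a-1)) ∧ 0 < a := by
    intro a ha
    obtain ⟨hq, hag, hgB⟩ := key a ha
    have h2 : π/2 ≤ a := ha.1
    have hgπ : C*a^2/(C*a-1) < π := lt_of_le_of_lt hgB hBπ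
    have haπ : a < π := lt_of_le_of_lt (le_trans hag hgB) hBπ
    have hsa : 0 < Real.sin a := Real.sin_pos_of_pos_of_lt_pi (by linarith) haπ
    have hsg : 0 < Real.sin (C*a^2/(C*a-1)) :=
      Real.sin_pos_of_pos_of_lt_pi (by linarith [le_trans h2 hag]) hgπ
    exact ⟨by linarith, h2, hag, hgπ, hsa, hsg, by linarith⟩
  -- derivative construction
  have hHD : ∀ a ∈ Icc (π/2) B, HasDerivAt
      (fun a => Real.log (Real.sin (C*a^2/(C*a-1))) - Real.log (C*a^2/(C*a-1))
        - Real.log (Real.sin a) + Real.log a)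
      (Real.cos (C*a^2/(C*a-1)) * ((C*(2*a)*(C*a-1) - C*a^2*C)/(C*a-1)^2)
          / Real.sin (C*a^2/(C*a-1))
        - ((C*(2*a)*(C*a-1) - C*a^2*C)/(C*a-1)^2) / (C*a^2/(C*a-1))
        - Real.cos a / Real.sin a + a⁻¹) a := by
    intro a ha
    obtain ⟨hq, h2, hag, hgπ, hsa, hsg, hapos⟩ := hgen a ha
    have hgpos : 0 < C*a^2/(C*a-1) := by linarith
    have h1 : HasDerivAt (fun a : ℝ => C*a^2) (C*(2*a)) a := by
      simpa using ((hasDerivAt_pow 2 a).const_mul C)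
    have h2' : HasDerivAt (fun a : ℝ => C*a - 1) C a := by
      simpa using (((hasDerivAt_id a).const_mul C).sub_const 1)
    have hgd : HasDerivAt (fun a : ℝ => C*a^2/(C*a-1))
        ((C*(2*a)*(C*a-1) - C*a^2*C)/(C*a-1)^2) a := h1.div h2' (ne_of_gt hq)
    have hA := (hgd.sin.log (ne_of_gt hsg)).sub (hgd.log (ne_of_gt hgpos))
    have hB' := ((Real.hasDerivAt_sin a).log (ne_of_gt hsa))
    have hC'' := Real.hasDerivAt_log (ne_of_gt hapos)
    exact (hA.sub hB').add hC''
  apply antitoneOn_of_deriv_nonpos (convex_Icc _ _)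
  · have hgc : ContinuousOn (fun a : ℝ => C*a^2/(C*a-1)) (Icc (π/2) B) :=
      ContinuousOn.div (by fun_prop) (by fun_prop)
        (fun a ha => ne_of_gt (hgen a ha).1)
    apply ContinuousOn.add
    apply ContinuousOn.sub
    apply ContinuousOn.sub
    · exact (Real.continuous_sin.comp_continuousOn hgc).log
        (fun a ha => ne_of_gt (hgen a ha).2.2.2.2.2.1)
    · exact hgc.log (fun a ha => ne_of_gt (by
        have h := hgen a ha; linarith [h.2.2.1, h.2.1, hπ]))
    · exact (Real.continuous_sin.continuousOn).log
        (fun a ha => ne_of_gt (hgen a ha).2.2.2.2.1)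
    · exact Real.continuousOn_log.mono (fun a ha => ne_of_gt (hgen a ha).2.2.2.2.2.2)
  · rw [interior_Icc]
    intro a ha
    exact (hHD a ⟨ha.1.le, ha.2.le⟩).differentiableAt.differentiableWithinAt
  · rw [interior_Icc]
    intro a ha
    have ha' : a ∈ Icc (π/2) B := ⟨ha.1.le, ha.2.le⟩
    obtain ⟨hq, h2, hag, hgπ, hsa, hsg, hapos⟩ := hgen a ha'
    rw [(hHD a ha').deriv]
    set c := C*a^2/(C*a-1) with hc
    have hane : a ≠ 0 := ne_of_gt hapos
    have hqne : C*a - 1 ≠ 0 := ne_of_gt hq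
    have e1 : (C*(2*a)*(C*a-1) - C*a^2*C)/(C*a-1)^2 = c*(2*a-c)/a^2 := by
      rw [hc]; field_simp
    rw [e1]
    have hL4 := L4 h2 hag hgπ
    have hcpos : 0 < c := by linarith
    have hfinal : Real.cos c * (c*(2*a-c)/a^2) / Real.sin c - c*(2*a-c)/a^2/c
          - Real.cos a / Real.sin a + a⁻¹
        = ((Real.sin a - a*Real.cos a)*a*Real.sin c
            - (Real.sin c - c*Real.cos c)*(2*a-c)*Real.sin a) / (a^2 * Real.sin c * Real.sin a) := by
      field_simp
      ring
    rw [hfinal]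
    exact div_nonpos_of_nonpos_of_nonneg (by linarith) (by positivity)

/-- The `sinc` inequality (Lemma `lem:sinc`): for `π/2 ≤ y < x ≤ π`,
`sinc(y)·(1 − (2/π)y(1 − y/x))·cos(y(1 − y/x)/(1 − (2/π)y(1 − y/x))) ≥ sinc(x)`,
where `sinc(z) = sin(z)/z`. -/
theorem stmt18 (x y : ℝ) (hy : Real.pi / 2 ≤ y) (hyx : y < x) (hx : x ≤ Real.pi) :
    Real.sin x / x ≤
      (Real.sin y / y) * (1 - (2 / Real.pi) * y * (1 - y / x)) *
        Real.cos (y * (1 - y / x) / (1 - (2 / Real.pi) * y * (1 - y / x))) := by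
  have hπ := Real.pi_pos
  have hy0 : 0 < y := by linarith
  have hx0 : 0 < x := by linarith
  have hxy : 0 < x - y := by linarith
  have hyπ : y < π := lt_of_lt_of_le hyx hx
  have hsy : 0 < Real.sin y := Real.sin_pos_of_pos_of_lt_pi hy0 hyπ
  have hxne : x ≠ 0 := by positivity
  have hyne : y ≠ 0 := by positivity
  have hπne : π ≠ 0 := by positivity
  have hxyne : x - y ≠ 0 := by linarith [hxy]
  have ht_eq : y*(1 - y/x) = y*(x-y)/x := by field_simp
  have ht0 : 0 < y*(1 - y/x) := by rw [ht_eq]; positivity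
  -- 4 y (x−y) ≤ π x
  have h4t : 4*(y*(x-y)) ≤ π*x := by
    nlinarith [mul_nonneg (by linarith : (0:ℝ) ≤ 2*y - π) (by linarith : (0:ℝ) ≤ 2*y - 2*x + π),
      mul_nonneg (le_of_lt hπ) (by linarith : (0:ℝ) ≤ π - x)]
  have hT4 : y*(x-y)/x ≤ π/4 := by rw [div_le_iff₀ hx0]; nlinarith
  have hTπ : 2*(y*(x-y)/x)/π ≤ 1/2 := by
    rw [div_le_iff₀ hπ]; nlinarith
  have hAt : 1 - 2/π*y*(1-y/x) = 1 - 2*(y*(x-y)/x)/π := by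
    rw [← ht_eq]; ring
  have hApos : 0 < 1 - 2/π*y*(1-y/x) := by rw [hAt]; linarith
  have hAhalf : (1 - 2/π*y*(1-y/x))*(π/2) = π/2 - y*(1-y/x) := by
    field_simp
  have htA2 : y*(1 - y/x) / (1 - 2/π*y*(1-y/x)) ≤ π/2 := by
    rw [div_le_iff₀ hApos]
    have h1 : y*(1-y/x) ≤ π/4 := ht_eq ▸ hT4
    nlinarith [hAhalf]
  have htA0 : 0 ≤ y*(1 - y/x) / (1 - 2/π*y*(1-y/x)) := by positivity
  have hcos0 : 0 ≤ Real.cos (y*(1 - y/x) / (1 - 2/π*y*(1-y/x))) :=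
    Real.cos_nonneg_of_mem_Icc ⟨by linarith, htA2⟩
  rcases hx.lt_or_eq with hxπ | rfl
  swap
  · rw [Real.sin_pi, zero_div]
    have h1 : 0 ≤ Real.sin y / y := by positivity
    exact mul_nonneg (mul_nonneg h1 (le_of_lt hApos)) hcos0
  -- main case x < π
  have hsx : 0 < Real.sin x := Real.sin_pos_of_pos_of_lt_pi hx0 hxπ
  obtain ⟨C, hCdef⟩ : ∃ C : ℝ, C = 1/(x-y) + 1/y := ⟨_, rfl⟩
  have hCrepr : C = x/(y*(x-y)) := by
    rw [hCdef, eq_div_iff (by positivity)]; field_simp [hxyne, ne_of_gt hy0]; ring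
  have hCy : C*y - 1 = y/(x-y) := by
    rw [hCdef, eq_div_iff hxyne]; field_simp [hxyne, ne_of_gt hy0]; ring
  have hCypos : 0 < C*y - 1 := by rw [hCy]; positivity
  have hgy : C*y^2/(C*y-1) = x := by
    rw [div_eq_iff (ne_of_gt hCypos), hCdef]; field_simp [hxyne, ne_of_gt hy0]; ring
  have hC4 : 4/π ≤ C := by
    rw [hCrepr, div_le_div_iff₀ hπ (by positivity)]
    nlinarith
  have hBπ : C*y^2/(C*y-1) < π := by rw [hgy]; exact hxπ
  have hanti := L5 C y hC4 hy hBπ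
  have hΨ := hanti (left_mem_Icc.2 hy) (right_mem_Icc.2 hy) hy
  simp only [hgy] at hΨ
  obtain ⟨v, hvdef⟩ : ∃ v : ℝ, v = C*(π/2)^2/(C*(π/2)-1) := ⟨_, rfl⟩
  rw [← hvdef] at hΨ
  have hD : 0 < π*x - 2*(y*(x-y)) := by nlinarith
  have hDne : π*x - 2*(y*(x-y)) ≠ 0 := ne_of_gt hD
  have hCπ2 : C*(π/2) - 1 = (π*x - 2*(y*(x-y)))/(2*(y*(x-y))) := by
    rw [hCdef, eq_div_iff (by positivity)]; field_simp [hxyne, ne_of_gt hy0]; ring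
  have hCπ2pos : 0 < C*(π/2) - 1 := by rw [hCπ2]; positivity
  have hv : v = π^2*x/(2*(π*x - 2*(y*(x-y)))) := by
    rw [hvdef, div_eq_div_iff (ne_of_gt hCπ2pos) (by positivity), hCdef]
    field_simp [hxyne, ne_of_gt hy0]
    ring
  have h4t' : 4*(y*(x-y)) < π*x := by
    nlinarith [mul_nonneg (by linarith : (0:ℝ) ≤ 2*y - π) (by linarith : (0:ℝ) ≤ 2*y - 2*x + π),
      mul_pos hπ (by linarith : (0:ℝ) < π - x)]
  have hvπ2 : π/2 < v := by
    rw [hv, lt_div_iff₀ (by positivity)]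
    nlinarith [mul_pos hπ (mul_pos hy0 hxy)]
  have hvπ : v < π := by
    rw [hv, div_lt_iff₀ (by positivity)]
    nlinarith [mul_lt_mul_of_pos_left h4t' hπ]
  have hv0 : 0 < v := by linarith
  have hsv : 0 < Real.sin v := Real.sin_pos_of_pos_of_lt_pi hv0 hvπ
  -- identities for A and t/A
  have hA_eq : 1 - 2/π*y*(1-y/x) = (π*x - 2*(y*(x-y)))/(π*x) := by
    rw [eq_div_iff (by positivity)]; field_simp
  have hAv : (1 - 2/π*y*(1-y/x)) * v = π/2 := by
    rw [hA_eq, hv, div_mul_div_comm, div_eq_div_iff (by positivity) (by norm_num)]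
    ring
  have htA : y*(1-y/x) / (1 - 2/π*y*(1-y/x)) = v - π/2 := by
    rw [div_eq_iff (ne_of_gt hApos)]
    linear_combination hAhalf - hAv
  rw [htA, show v - π/2 = -(π/2 - v) by ring, Real.cos_neg, Real.cos_pi_div_two_sub]
  have hA_v : 1 - 2/π*y*(1-y/x) = π/2/v := by
    rw [eq_div_iff (ne_of_gt hv0)]; exact hAv
  rw [hA_v]
  -- log comparison
  have hlhs : 0 < Real.sin x / x := by positivity
  have hrhs : 0 < Real.sin y / y * (π/2/v) * Real.sin v := by positivity
  rw [← Real.log_le_log_iff hlhs hrhs]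
  rw [Real.log_div (ne_of_gt hsx) (ne_of_gt hx0),
    Real.log_mul (by positivity) (ne_of_gt hsv),
    Real.log_mul (by positivity) (by positivity),
    Real.log_div (ne_of_gt hsy) (ne_of_gt hy0),
    Real.log_div (by positivity) (ne_of_gt hv0)]
  rw [Real.sin_pi_div_two, Real.log_one] at hΨ
  linarith [hΨ]
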